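/- (Global energy stability of the semi-discrete scheme.) Let m : Fin N → ℝ. Suppose u : ℝ → Fin N → E is continuously differentiable in time, p : ℝ → Fin N → ℝ is continuous, and for every time t and every node i: m i • (du/dt)(t) i = RHS i (computed from u t and p t), and the discrete continuity constraint holds at every node. If in addition dadd i j ≥ 0 and dp i j ≥ 0 for all i ≠ j, then the total kinetic energy t ↦ Σ_i m i·‖u t i‖²/2 is a nonincreasing (antitone) function of t. -/

import Mathlib

open scoped RealInnerProductSpace BigOperators

private lemma sum_erase_swap {N : ℕ} {M : Type*} [AddCommMonoid M] (f : Fin N → Fin N → M) :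
    ∑ i, ∑ j ∈ Finset.univ.erase i, f i j = ∑ i, ∑ j ∈ Finset.univ.erase i, f j i := by
  rw [Finset.sum_comm' (t' := Finset.univ) (s' := fun j => Finset.univ.erase j)
    (fun i j => by simp [Finset.mem_erase, ne_comm])]

private noncomputable def gfun {d N : ℕ} (v : Fin N → EuclideanSpace ℝ (Fin d)) (q : Fin N → ℝ)
    (c : Fin N → Fin N → EuclideanSpace ℝ (Fin d)) (dadd : Fin N → Fin N → ℝ) :
    Fin N → Fin N → ℝ := fun i j =>
  (dadd i j - ⟪v j + v i, c i j⟫ / 2) * ⟪v j - v i, v i⟫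
    - (q j - q i) * ⟪c i j, v i⟫ - (⟪v j + v i, c i j⟫ / 2) * ⟪v i, v i⟫

private lemma gfun_pair {d N : ℕ} (v : Fin N → EuclideanSpace ℝ (Fin d)) (q : Fin N → ℝ)
    (c : Fin N → Fin N → EuclideanSpace ℝ (Fin d))
    (hc : ∀ i j, c j i = -c i j)
    (dadd : Fin N → Fin N → ℝ) (hdadd_symm : ∀ i j, dadd i j = dadd j i) (i j : Fin N) :
    gfun v q c dadd i j + gfun v q c dadd j i
      = -(dadd i j * ⟪v j - v i, v j - v i⟫) - (q j - q i) * ⟪v j + v i, c i j⟫ := by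
  simp only [gfun, hc i j, hdadd_symm j i, inner_neg_right, inner_neg_left,
    inner_sub_left, inner_sub_right, inner_add_left, inner_add_right]
  rw [real_inner_comm (c i j) (v i), real_inner_comm (c i j) (v j),
    real_inner_comm (v j) (v i)]
  ring

private lemma pressure_sum {d N : ℕ} (v : Fin N → EuclideanSpace ℝ (Fin d)) (q : Fin N → ℝ)
    (c : Fin N → Fin N → EuclideanSpace ℝ (Fin d))
    (hc : ∀ i j, c j i = -c i j)
    (dp : Fin N → Fin N → ℝ) (hdp_symm : ∀ i j, dp i j = dp j i)
    (hcont : ∀ i, ∑ j ∈ Finset.univ.erase i,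
      (dp i j * (q j - q i) - ⟪v j + v i, c i j⟫) = 0) :
    ∑ i, ∑ j ∈ Finset.univ.erase i, (q j - q i) * ⟪v j + v i, c i j⟫
      = ∑ i, ∑ j ∈ Finset.univ.erase i, dp i j * (q j - q i) ^ 2 := by
  set b : Fin N → Fin N → ℝ := fun i j => ⟪v j + v i, c i j⟫ with hb
  have hb_anti : ∀ i j, b j i = -b i j := by
    intro i j
    simp only [hb, hc i j, inner_neg_right]
    rw [add_comm (v i) (v j)]
  have hrow : ∀ i, ∑ j ∈ Finset.univ.erase i, b i j
      = ∑ j ∈ Finset.univ.erase i, dp i j * (q j - q i) := by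
    intro i
    have h := hcont i
    rw [Finset.sum_sub_distrib] at h
    linarith
  have hS1 : ∑ i, ∑ j ∈ Finset.univ.erase i, q i * b i j
      = ∑ i, ∑ j ∈ Finset.univ.erase i, q i * (dp i j * (q j - q i)) := by
    refine Finset.sum_congr rfl fun i _ => ?_
    rw [← Finset.mul_sum, ← Finset.mul_sum, hrow i]
  have hS2 : ∑ i, ∑ j ∈ Finset.univ.erase i, q j * b i j
      = -∑ i, ∑ j ∈ Finset.univ.erase i, q i * b i j := by
    rw [sum_erase_swap (fun i j => q j * b i j), ← Finset.sum_neg_distrib]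
    refine Finset.sum_congr rfl fun i _ => ?_
    rw [← Finset.sum_neg_distrib]
    refine Finset.sum_congr rfl fun j _ => ?_
    rw [hb_anti i j]; ring
  have hS3 : 2 * ∑ i, ∑ j ∈ Finset.univ.erase i, q i * (dp i j * (q j - q i))
      = -∑ i, ∑ j ∈ Finset.univ.erase i, dp i j * (q j - q i) ^ 2 := by
    have hswap := sum_erase_swap (fun i j => q i * (dp i j * (q j - q i)))
    have hcomb : ∑ i, ∑ j ∈ Finset.univ.erase i,
        (q i * (dp i j * (q j - q i)) + q j * (dp j i * (q i - q j)))
        = -∑ i, ∑ j ∈ Finset.univ.erase i, dp i j * (q j - q i) ^ 2 := by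
      rw [← Finset.sum_neg_distrib]
      refine Finset.sum_congr rfl fun i _ => ?_
      rw [← Finset.sum_neg_distrib]
      refine Finset.sum_congr rfl fun j _ => ?_
      rw [hdp_symm j i]; ring
    have hsplit : ∑ i, ∑ j ∈ Finset.univ.erase i,
        (q i * (dp i j * (q j - q i)) + q j * (dp j i * (q i - q j)))
        = (∑ i, ∑ j ∈ Finset.univ.erase i, q i * (dp i j * (q j - q i)))
          + ∑ i, ∑ j ∈ Finset.univ.erase i, q j * (dp j i * (q i - q j)) := by
      simp [Finset.sum_add_distrib]
    linarith [hswap, hcomb, hsplit]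
  have hmain : ∑ i, ∑ j ∈ Finset.univ.erase i, (q j - q i) * b i j
      = (∑ i, ∑ j ∈ Finset.univ.erase i, q j * b i j)
        - ∑ i, ∑ j ∈ Finset.univ.erase i, q i * b i j := by
    rw [← Finset.sum_sub_distrib]
    refine Finset.sum_congr rfl fun i _ => ?_
    rw [← Finset.sum_sub_distrib]
    refine Finset.sum_congr rfl fun j _ => ?_
    ring
  linarith [hmain, hS1, hS2, hS3]

private lemma energy_dissipation {d N : ℕ}
    (v : Fin N → EuclideanSpace ℝ (Fin d)) (q : Fin N → ℝ)
    (c : Fin N → Fin N → EuclideanSpace ℝ (Fin d))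
    (hc : ∀ i j, c j i = -c i j)
    (dadd dp : Fin N → Fin N → ℝ)
    (hdadd_symm : ∀ i j, dadd i j = dadd j i)
    (hdp_symm : ∀ i j, dp i j = dp j i)
    (hcont : ∀ i, ∑ j ∈ Finset.univ.erase i,
      (dp i j * (q j - q i) - ⟪v j + v i, c i j⟫) = 0)
    (hdadd_nn : ∀ i j, i ≠ j → 0 ≤ dadd i j)
    (hdp_nn : ∀ i j, i ≠ j → 0 ≤ dp i j) :
    ∑ i, ⟪(∑ j ∈ Finset.univ.erase i,
        ((dadd i j - ⟪((1 : ℝ) / 2) • (v j + v i), c i j⟫) • (v j - v i)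
          - (q j - q i) • c i j))
      - (∑ j ∈ Finset.univ.erase i,
          ⟪((1 : ℝ) / 2) • (v j + v i), c i j⟫) • v i, v i⟫ ≤ 0 := by
  -- Step A: rewrite as a double sum of gfun
  have hT : ∑ i, ⟪(∑ j ∈ Finset.univ.erase i,
        ((dadd i j - ⟪((1 : ℝ) / 2) • (v j + v i), c i j⟫) • (v j - v i)
          - (q j - q i) • c i j))
      - (∑ j ∈ Finset.univ.erase i,
          ⟪((1 : ℝ) / 2) • (v j + v i), c i j⟫) • v i, v i⟫
      = ∑ i, ∑ j ∈ Finset.univ.erase i, gfun v q c dadd i j := by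
    refine Finset.sum_congr rfl fun i _ => ?_
    simp only [inner_sub_left, sum_inner, inner_smul_left, real_inner_smul_left,
      RCLike.inner_apply, conj_trivial, Finset.sum_mul, ← Finset.sum_sub_distrib]
    refine Finset.sum_congr rfl fun j _ => ?_
    simp only [gfun, inner_sub_left]
    ring
  rw [hT]
  -- Step B: symmetrize
  have hsym : 2 * (∑ i, ∑ j ∈ Finset.univ.erase i, gfun v q c dadd i j)
      = ∑ i, ∑ j ∈ Finset.univ.erase i,
          (gfun v q c dadd i j + gfun v q c dadd j i) := by
    have hswap := sum_erase_swap (gfun v q c dadd)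
    have hsplit : ∑ i, ∑ j ∈ Finset.univ.erase i,
        (gfun v q c dadd i j + gfun v q c dadd j i)
        = (∑ i, ∑ j ∈ Finset.univ.erase i, gfun v q c dadd i j)
          + ∑ i, ∑ j ∈ Finset.univ.erase i, gfun v q c dadd j i := by
      simp [Finset.sum_add_distrib]
    linarith
  -- Step C: pointwise pair identity
  have hpair : ∑ i, ∑ j ∈ Finset.univ.erase i,
        (gfun v q c dadd i j + gfun v q c dadd j i)
      = (-∑ i, ∑ j ∈ Finset.univ.erase i, dadd i j * ⟪v j - v i, v j - v i⟫)
        - ∑ i, ∑ j ∈ Finset.univ.erase i, (q j - q i) * ⟪v j + v i, c i j⟫ := by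
    rw [← Finset.sum_neg_distrib, ← Finset.sum_sub_distrib]
    refine Finset.sum_congr rfl fun i _ => ?_
    rw [← Finset.sum_neg_distrib, ← Finset.sum_sub_distrib]
    refine Finset.sum_congr rfl fun j _ => ?_
    exact gfun_pair v q c hc dadd hdadd_symm i j
  -- Step D: nonnegativity of the dissipation terms
  have hA : 0 ≤ ∑ i, ∑ j ∈ Finset.univ.erase i, dadd i j * ⟪v j - v i, v j - v i⟫ := by
    refine Finset.sum_nonneg fun i _ => Finset.sum_nonneg fun j hj => ?_
    have hij : i ≠ j := (Finset.ne_of_mem_erase hj).symm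
    exact mul_nonneg (hdadd_nn i j hij) real_inner_self_nonneg
  have hB : 0 ≤ ∑ i, ∑ j ∈ Finset.univ.erase i, dp i j * (q j - q i) ^ 2 := by
    refine Finset.sum_nonneg fun i _ => Finset.sum_nonneg fun j hj => ?_
    have hij : i ≠ j := (Finset.ne_of_mem_erase hj).symm
    exact mul_nonneg (hdp_nn i j hij) (sq_nonneg _)
  have hP := pressure_sum v q c hc dp hdp_symm hcont
  linarith [hsym, hpair]


/-- Global energy stability of the semi-discrete scheme: if `dadd` and `dp`
are nonnegative off the diagonal, the total kinetic energy
`t ↦ Σ_i m i · ‖u t i‖²/2` is nonincreasing along solutions. -/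
theorem global_energy_stability_semidiscrete
    (d N : ℕ) (hd : 1 ≤ d) (hN : 1 ≤ N)
    (m : Fin N → ℝ)
    (c : Fin N → Fin N → EuclideanSpace ℝ (Fin d))
    (hc : ∀ i j, c j i = -c i j)
    (dadd dp : Fin N → Fin N → ℝ)
    (hdadd_symm : ∀ i j, dadd i j = dadd j i)
    (hdp_symm : ∀ i j, dp i j = dp j i)
    (u : ℝ → Fin N → EuclideanSpace ℝ (Fin d))
    (u' : ℝ → Fin N → EuclideanSpace ℝ (Fin d))
    (p : ℝ → Fin N → ℝ)
    (hu' : ∀ i t, HasDerivAt (fun s => u s i) (u' t i) t)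
    (hu'cont : ∀ i, Continuous fun t => u' t i)
    (hpcont : ∀ i, Continuous fun t => p t i)
    (hscheme : ∀ t i, m i • u' t i =
      (∑ j ∈ Finset.univ.erase i,
        ((dadd i j - ⟪((1 : ℝ) / 2) • (u t j + u t i), c i j⟫) • (u t j - u t i)
          - (p t j - p t i) • c i j))
      - (∑ j ∈ Finset.univ.erase i,
          ⟪((1 : ℝ) / 2) • (u t j + u t i), c i j⟫) • u t i)
    (hcont : ∀ t i, ∑ j ∈ Finset.univ.erase i,
      (dp i j * (p t j - p t i) - ⟪u t j + u t i, c i j⟫) = 0)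
    (hdadd_nn : ∀ i j, i ≠ j → 0 ≤ dadd i j)
    (hdp_nn : ∀ i j, i ≠ j → 0 ≤ dp i j) :
    Antitone fun t => ∑ i, m i * ‖u t i‖ ^ 2 / 2 := by
  have hE : ∀ t, HasDerivAt (fun s => ∑ i, m i * ‖u s i‖ ^ 2 / 2)
      (∑ i, ⟪m i • u' t i, u t i⟫) t := by
    intro t
    refine HasDerivAt.fun_sum fun i _ => ?_
    have h := ((hu' i t).inner ℝ (hu' i t)).const_mul (m i / 2)
    have hfun : (fun s => m i * ‖u s i‖ ^ 2 / 2)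
        = fun s => m i / 2 * ⟪u s i, u s i⟫ := by
      funext s
      rw [real_inner_self_eq_norm_sq]
      ring
    rw [hfun]
    refine h.congr_deriv ?_
    rw [real_inner_smul_left, real_inner_comm (u t i) (u' t i)]
    ring
  refine antitone_of_deriv_nonpos (fun t => (hE t).differentiableAt) fun t => ?_
  rw [(hE t).deriv]
  have h0 : ∀ i, ⟪m i • u' t i, u t i⟫
      = ⟪(∑ j ∈ Finset.univ.erase i,
        ((dadd i j - ⟪((1 : ℝ) / 2) • (u t j + u t i), c i j⟫) • (u t j - u t i)
          - (p t j - p t i) • c i j))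
      - (∑ j ∈ Finset.univ.erase i,
          ⟪((1 : ℝ) / 2) • (u t j + u t i), c i j⟫) • u t i, u t i⟫ := by
    intro i
    rw [hscheme t i]
  calc ∑ i, ⟪m i • u' t i, u t i⟫
      = ∑ i, ⟪(∑ j ∈ Finset.univ.erase i,
        ((dadd i j - ⟪((1 : ℝ) / 2) • (u t j + u t i), c i j⟫) • (u t j - u t i)
          - (p t j - p t i) • c i j))
      - (∑ j ∈ Finset.univ.erase i,
          ⟪((1 : ℝ) / 2) • (u t j + u t i), c i j⟫) • u t i, u t i⟫ :=
        Finset.sum_congr rfl fun i _ => h0 i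
    _ ≤ 0 := energy_dissipation (u t) (p t) c hc dadd dp hdadd_symm hdp_symm
        (hcont t) hdadd_nn hdp_nn
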